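/- Let X be a random Hermitian operator on a finite-dimensional Hilbert space (taking finitely many values) and Δt > 0. Then ‖E[exp(-iXΔt)] - exp(-i E[X] Δt)‖ ≤ E[‖X‖²]Δt² , where E denotes expectation and ‖·‖ the operator norm. -/

import Mathlib

set_option maxHeartbeats 1000000
set_option synthInstance.maxHeartbeats 1000000

noncomputable section


open Complex NormedSpace

private lemma gfun_nonneg (y : ℝ) (hy : 0 ≤ y) :
    0 ≤ y^4/4 - y^2 + 2*y*Real.sin y + 2*Real.cos y - 2 := by
  set g : ℝ → ℝ := fun y => y^4/4 - y^2 + 2*y*Real.sin y + 2*Real.cos y - 2 with hg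
  have hderiv : ∀ x : ℝ, HasDerivAt g (x * (x^2 - 2 + 2*Real.cos x)) x := by
    intro x
    have h1 : HasDerivAt (fun y : ℝ => y^4/4) ((4:ℕ) * x^3 / 4) x :=
      (hasDerivAt_pow 4 x).div_const 4
    have h2 : HasDerivAt (fun y : ℝ => y^2) ((2:ℕ) * x^1) x := hasDerivAt_pow 2 x
    have h3 : HasDerivAt (fun y : ℝ => 2*y*Real.sin y)
        (2 * Real.sin x + 2*x*Real.cos x) x := by
      have := ((hasDerivAt_id x).const_mul 2).mul (Real.hasDerivAt_sin x)
      simp only [id_eq, mul_one] at this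
      exact this
    have h4 : HasDerivAt (fun y : ℝ => 2*Real.cos y) (2 * (-Real.sin x)) x :=
      (Real.hasDerivAt_cos x).const_mul 2
    have := (((h1.sub h2).add h3).add h4).sub_const 2
    refine this.congr_deriv ?_
    push_cast
    ring
  have hmono : MonotoneOn g (Set.Ici 0) := by
    apply monotoneOn_of_deriv_nonneg (convex_Ici 0)
    · exact Continuous.continuousOn (by fun_prop)
    · intro x _
      exact (hderiv x).differentiableAt.differentiableWithinAt
    · intro x hx
      rw [interior_Ici] at hx
      rw [(hderiv x).deriv]
      have hc := Real.one_sub_sq_div_two_le_cos (x := x)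
      nlinarith [le_of_lt (Set.mem_Ioi.mp hx)]
  have h0 : g 0 = 0 := by simp [hg]
  have := hmono (Set.self_mem_Ici) (Set.mem_Ici.mpr hy) hy
  rw [h0] at this
  exact this

private lemma exp_I_bound (y : ℝ) :
    ‖Complex.exp (y * Complex.I) - 1 - y * Complex.I‖ ≤ y^2/2 := by
  set w := Complex.exp (y * Complex.I) - 1 - y * Complex.I with hw
  have hre : w.re = Real.cos y - 1 := by
    simp [hw, Complex.exp_re, Complex.sub_re]
  have him : w.im = Real.sin y - y := by
    simp [hw, Complex.exp_im, Complex.sub_im]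
  have hsq : ‖w‖ ^ 2 = (Real.cos y - 1)^2 + (Real.sin y - y)^2 := by
    rw [Complex.sq_norm, Complex.normSq_apply, hre, him]
    ring
  have hkey : (Real.cos y - 1)^2 + (Real.sin y - y)^2 ≤ (y^2/2)^2 := by
    rcases le_total 0 y with hy | hy
    · have := gfun_nonneg y hy
      nlinarith [Real.sin_sq_add_cos_sq y]
    · have := gfun_nonneg (-y) (by linarith)
      simp only [Real.sin_neg, Real.cos_neg] at this
      nlinarith [Real.sin_sq_add_cos_sq y]
  nlinarith [norm_nonneg w, sq_nonneg (y^2/2), hsq]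

private lemma op_key {n : ℕ} (B : EuclideanSpace ℂ (Fin n) →L[ℂ] EuclideanSpace ℂ (Fin n))
    (hB : IsSelfAdjoint B) (t : ℝ) :
    ‖NormedSpace.exp ((-(Complex.I * t)) • B) - 1 - (-(Complex.I * t)) • B‖ ≤ t^2 * ‖B‖^2 / 2 := by
  rcases subsingleton_or_nontrivial (EuclideanSpace ℂ (Fin n)) with hs | hs
  · have h0 : (NormedSpace.exp ((-(Complex.I * t)) • B) - 1 - (-(Complex.I * t)) • B) = 0 :=
      Subsingleton.elim _ _
    rw [h0, norm_zero]
    positivity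
  · have hN : IsStarNormal B := hB.isStarNormal
    set c : ℂ := -(Complex.I * t) with hc
    have hcB : IsStarNormal (c • B) := by
      constructor
      rw [star_smul, commute_iff_eq, smul_mul_smul_comm, smul_mul_smul_comm, mul_comm, hB.star_eq]
    have hcont : ∀ d : ℂ, ContinuousOn (fun z : ℂ => Complex.exp (d * z)) (spectrum ℂ B) :=
      fun d => (Complex.continuous_exp.comp (continuous_const.mul continuous_id)).continuousOn
    have h1 : cfc (fun z : ℂ => Complex.exp (c * z) - 1 - c * z) B
        = NormedSpace.exp (c • B) - 1 - c • B := by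
      rw [cfc_sub (fun z : ℂ => Complex.exp (c * z) - 1) (fun z : ℂ => c * z) B
        (by fun_prop (disch := assumption)) (by fun_prop),
        cfc_sub (fun z : ℂ => Complex.exp (c * z)) (fun _ : ℂ => (1:ℂ)) B
        (by fun_prop (disch := assumption)) (by fun_prop)]
      rw [cfc_const 1 B, map_one, cfc_const_mul_id c B]
      congr 1
      congr 1
      rw [show (fun z : ℂ => Complex.exp (c * z)) = (fun z : ℂ => Complex.exp (c • z)) from rfl]
      rw [cfc_comp_smul c Complex.exp B (by fun_prop)]
      rw [Complex.exp_eq_exp_ℂ]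
      exact CFC.exp_eq_normedSpace_exp
    rw [← h1]
    apply norm_cfc_le (by positivity)
    intro x hx
    have hxre : x = (x.re : ℂ) := hB.mem_spectrum_eq_re hx
    have hxn : ‖x‖ ≤ ‖B‖ := spectrum.norm_le_norm_of_mem hx
    set r : ℝ := x.re with hr
    have harg : c * x = ((-(t * r) : ℝ) : ℂ) * Complex.I := by
      rw [hxre, hc]
      push_cast
      ring
    have hcx : Complex.exp (c * x) - 1 - c * x
        = Complex.exp (((-(t * r) : ℝ) : ℂ) * Complex.I) - 1
          - ((-(t * r) : ℝ) : ℂ) * Complex.I := by rw [harg]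
    rw [hcx]
    calc ‖Complex.exp (((-(t * r) : ℝ) : ℂ) * Complex.I) - 1
          - ((-(t * r) : ℝ) : ℂ) * Complex.I‖ ≤ (-(t * r))^2 / 2 := exp_I_bound (-(t * r))
      _ ≤ t^2 * ‖B‖^2 / 2 := by
          have hrb : |r| ≤ ‖B‖ := by
            calc |r| = |x.re| := rfl
              _ ≤ ‖x‖ := Complex.abs_re_le_norm x
              _ ≤ ‖B‖ := hxn
          have h2 : r^2 ≤ ‖B‖^2 := by
            nlinarith [_root_.sq_abs r, mul_self_le_mul_self (abs_nonneg r) hrb]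
          nlinarith [mul_le_mul_of_nonneg_left h2 (sq_nonneg t)]

/-- For a random Hermitian operator `X` taking finitely many values `X i` with
probabilities `p i`, and `Δt > 0`,
`‖E[exp(-i X Δt)] - exp(-i E[X] Δt)‖ ≤ E[‖X‖²] Δt²`. -/
theorem stmt1 {n m : ℕ}
    (p : Fin m → ℝ) (hp : ∀ i, 0 ≤ p i) (hp1 : ∑ i, p i = 1)
    (X : Fin m → (EuclideanSpace ℂ (Fin n) →L[ℂ] EuclideanSpace ℂ (Fin n)))
    (hX : ∀ i, IsSelfAdjoint (X i)) (Δt : ℝ) (hΔt : 0 < Δt) :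
    ‖(∑ i, p i • NormedSpace.exp ((-(Complex.I * Δt)) • X i)) -
        NormedSpace.exp ((-(Complex.I * Δt)) • ∑ i, p i • X i)‖ ≤
      (∑ i, p i * ‖X i‖ ^ 2) * Δt ^ 2 := by
  have hcast : ∀ (r : ℝ) (Y : EuclideanSpace ℂ (Fin n) →L[ℂ] EuclideanSpace ℂ (Fin n)),
      r • Y = ((r : ℂ)) • Y := fun _ _ => rfl
  simp only [hcast]
  have hns : ∀ (i : Fin m) (Y : EuclideanSpace ℂ (Fin n) →L[ℂ] EuclideanSpace ℂ (Fin n)),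
      ‖((p i : ℂ)) • Y‖ = p i * ‖Y‖ := by
    intro i Y
    have h := norm_smul (α := ℂ)
      (β := EuclideanSpace ℂ (Fin n) →L[ℂ] EuclideanSpace ℂ (Fin n)) ((p i : ℂ)) Y
    rw [Complex.norm_real, Real.norm_eq_abs, _root_.abs_of_nonneg (hp i)] at h
    exact h
  set c : ℂ := -(Complex.I * Δt) with hc
  set S := ∑ i, ((p i : ℂ)) • X i with hS
  have hSsa : IsSelfAdjoint S := by
    rw [hS]
    exact Finset.sum_induction _ IsSelfAdjoint (fun a b ha hb => by exact IsSelfAdjoint.add (R := EuclideanSpace ℂ (Fin n) →L[ℂ] EuclideanSpace ℂ (Fin n)) ha hb)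
      (by exact IsSelfAdjoint.zero (EuclideanSpace ℂ (Fin n) →L[ℂ] EuclideanSpace ℂ (Fin n))) (fun i _ => IsSelfAdjoint.smul (A := EuclideanSpace ℂ (Fin n) →L[ℂ] EuclideanSpace ℂ (Fin n)) (Complex.conj_ofReal (p i)) (hX i))
  have key : (∑ i, ((p i : ℂ)) • NormedSpace.exp (c • X i)) - NormedSpace.exp (c • S)
      = (∑ i, ((p i : ℂ)) • (NormedSpace.exp (c • X i) - 1 - c • X i)) - (NormedSpace.exp (c • S) - 1 - c • S) := by
    have h2 : ∑ i, ((p i : ℂ)) • (1 : EuclideanSpace ℂ (Fin n) →L[ℂ] EuclideanSpace ℂ (Fin n)) = 1 := by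
      rw [← Finset.sum_smul, ← Complex.ofReal_sum, hp1, Complex.ofReal_one, one_smul]
    have h3 : ∑ i, ((p i : ℂ)) • (c • X i) = c • S := by
      rw [hS, Finset.smul_sum]
      exact Finset.sum_congr rfl fun i _ => (smul_comm _ _ _).symm
    simp only [smul_sub, Finset.sum_sub_distrib]
    rw [h2, h3]
    abel
  rw [key]
  have hA := fun i => op_key (X i) (hX i) Δt
  have hAS := op_key S hSsa Δt
  have step1 : ‖(∑ i, ((p i : ℂ)) • (NormedSpace.exp (c • X i) - 1 - c • X i)) - (NormedSpace.exp (c • S) - 1 - c • S)‖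
      ≤ (∑ i, p i * (Δt^2 * ‖X i‖^2 / 2)) + Δt^2 * ‖S‖^2 / 2 := by
    refine (norm_sub_le _ _).trans (add_le_add ?_ ?_)
    · refine (norm_sum_le _ _).trans (Finset.sum_le_sum fun i _ => ?_)
      rw [hns i]
      exact mul_le_mul_of_nonneg_left (hA i) (hp i)
    · exact hAS
  have hSn : ‖S‖ ≤ ∑ i, p i * ‖X i‖ := by
    refine (norm_sum_le _ _).trans (Finset.sum_le_sum fun i _ => ?_)
    rw [hns i]
  have hCS : (∑ i, p i * ‖X i‖)^2 ≤ ∑ i, p i * ‖X i‖^2 := by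
    have h := Finset.sum_sq_le_sum_mul_sum_of_sq_eq_mul Finset.univ
      (r := fun i => p i * ‖X i‖) (f := p) (g := fun i => p i * ‖X i‖^2)
      (fun i _ => hp i) (fun i _ => mul_nonneg (hp i) (sq_nonneg _)) (fun i _ => by ring)
    rwa [hp1, one_mul] at h
  have hS2 : ‖S‖^2 ≤ ∑ i, p i * ‖X i‖^2 :=
    (pow_le_pow_left₀ (norm_nonneg S) hSn 2).trans hCS
  have hrw : ∑ i, p i * (Δt^2 * ‖X i‖^2 / 2) = (∑ i, p i * ‖X i‖^2) * (Δt^2 / 2) := by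
    rw [Finset.sum_mul]
    exact Finset.sum_congr rfl fun i _ => by ring
  have hfin := mul_le_mul_of_nonneg_left hS2 (by positivity : (0:ℝ) ≤ Δt^2/2)
  rw [hrw] at step1
  nlinarith [step1, sq_nonneg Δt]
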